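/- Let p ≥ 5 be an integer and n an odd integer with n ≥ 2p - 1. Then (n-1)^p + (n-1)·2^p < 2(n-2)^p + (n-2)·2^p; equivalently, e_p(F_n) < e_p(K_{2,n-2}). -/
import Mathlib

lemma aux_epF (p : ℕ) (hp : 5 ≤ p) (x : ℝ) (hx : 8 ≤ x) (hpx : 3 * p ≤ 2 * x) :
    (x + 1) ^ p + 2 ^ p < 2 * x ^ p := by
  have hx0 : (0 : ℝ) < x := by linarith
  have hxp0 : (0 : ℝ) < x ^ p := pow_pos hx0 p
  -- (x+1)^p ≤ x^p * exp(p/x)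
  have h1 : (x + 1) ^ p ≤ x ^ p * Real.exp (p / x) := by
    have hb : x + 1 ≤ x * Real.exp (1 / x) := by
      have := Real.add_one_le_exp (1 / x)
      have h := mul_le_mul_of_nonneg_left this (le_of_lt hx0)
      calc x + 1 = x * (1 / x + 1) := by field_simp; ring
        _ ≤ x * Real.exp (1 / x) := h
    calc (x + 1) ^ p ≤ (x * Real.exp (1 / x)) ^ p := by
          apply pow_le_pow_left₀ (by positivity) hb
      _ = x ^ p * Real.exp (1 / x) ^ p := mul_pow _ _ _
      _ = x ^ p * Real.exp (p / x) := by
          rw [← Real.exp_nat_mul]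
          ring_nf
  -- exp(p/x) ≤ exp(2/3)
  have h2 : Real.exp (p / x) ≤ Real.exp (2 / 3) := by
    apply Real.exp_le_exp.mpr
    rw [div_le_div_iff₀ hx0 (by norm_num)]
    linarith
  -- exp(2/3) < 1.95
  have h3 : Real.exp (2 / 3) < 1.95 := by
    by_contra h
    push_neg at h
    have hcube : (1.95 : ℝ) ^ 3 ≤ Real.exp (2 / 3) ^ 3 := by
      apply pow_le_pow_left₀ (by norm_num) h
    have : Real.exp (2 / 3) ^ 3 = Real.exp 2 := by
      rw [show (2 : ℝ) = 2 / 3 + 2 / 3 + 2 / 3 by norm_num, Real.exp_add, Real.exp_add]; ring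
    rw [this] at hcube
    have he : Real.exp 2 < 2.7182818286 ^ 2 := by
      have := Real.exp_one_lt_d9
      calc Real.exp 2 = Real.exp 1 ^ 2 := by
            rw [show (2 : ℝ) = 1 + 1 by norm_num, Real.exp_add]; ring
        _ < 2.7182818286 ^ 2 :=
            pow_lt_pow_left₀ this (le_of_lt (Real.exp_pos 1)) (by norm_num)
    nlinarith
  -- 2^p ≤ x^p / 1024
  have h4 : (2 : ℝ) ^ p ≤ x ^ p * (1 / 1024) := by
    have hb : (2 : ℝ) ≤ x / 4 := by linarith
    have h5 : (2 : ℝ) ^ p ≤ (x / 4) ^ p := pow_le_pow_left₀ (by norm_num) hb p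
    have h6 : (x / 4 : ℝ) ^ p = x ^ p / 4 ^ p := div_pow x 4 p
    have h7 : (1024 : ℝ) ≤ 4 ^ p := by
      calc (1024 : ℝ) = 4 ^ 5 := by norm_num
        _ ≤ 4 ^ p := pow_le_pow_right₀ (by norm_num) hp
    have h8 : x ^ p / 4 ^ p ≤ x ^ p / 1024 :=
      div_le_div_of_nonneg_left (le_of_lt hxp0) (by norm_num) h7
    calc (2 : ℝ) ^ p ≤ x ^ p / 4 ^ p := by rw [← h6]; exact h5
      _ ≤ x ^ p / 1024 := h8
      _ = x ^ p * (1 / 1024) := by ring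
  have hmain : (x + 1) ^ p ≤ x ^ p * Real.exp (2 / 3) :=
    h1.trans (mul_le_mul_of_nonneg_left h2 (le_of_lt hxp0))
  nlinarith [mul_lt_mul_of_pos_left h3 hxp0]

theorem epF_lt_epK2 (p n : ℕ) (hp : 5 ≤ p) (hodd : Odd n) (hn : 2 * p - 1 ≤ n) :
    ((n : ℝ) - 1) ^ p + ((n : ℝ) - 1) * 2 ^ p <
      2 * ((n : ℝ) - 2) ^ p + ((n : ℝ) - 2) * 2 ^ p := by
  have hn9 : 9 ≤ n := by omega
  have hnr : 2 * (p : ℝ) - 1 ≤ (n : ℝ) := by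
    have h : ((2 * p - 1 : ℕ) : ℝ) ≤ (n : ℝ) := Nat.cast_le.mpr hn
    push_cast [Nat.cast_sub (by omega : 1 ≤ 2 * p)] at h
    linarith
  by_cases hp6 : 6 ≤ p
  · have hpr : (6 : ℝ) ≤ (p : ℝ) := by exact_mod_cast hp6
    have key := aux_epF p hp ((n : ℝ) - 2) (by linarith) (by linarith)
    have hrw : ((n : ℝ) - 2) + 1 = (n : ℝ) - 1 := by ring
    rw [hrw] at key
    nlinarith [key]
  · have hp5 : p = 5 := by omega
    subst hp5
    by_cases hne : n = 9
    · subst hne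
      norm_num
    · have hn10 : 10 ≤ n := by omega
      have hnr10 : (10 : ℝ) ≤ (n : ℝ) := by exact_mod_cast hn10
      have key := aux_epF 5 (le_refl 5) ((n : ℝ) - 2) (by linarith) (by push_cast; linarith)
      have hrw : ((n : ℝ) - 2) + 1 = (n : ℝ) - 1 := by ring
      rw [hrw] at key
      nlinarith [key]
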